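/- Let p ≥ 2. For each m ≥ 2 there exists a bounded m-linear form T_m on (ℝ^{2^{m-1}}, ℓ^p) × (ℝ^{2^{m-1}}, ℓ^∞)^{m-1} with operator norm ‖T_m‖ = 2^{m-1}, all of whose coefficients T_m(e_{i_1}, …, e_{i_m}) lie in {-1, 0, 1}, and such that (Σ_{i_1} (Σ_{i_2,…,i_m} |T_m(e_{i_1},…,e_{i_m})|²)^{(1/2)·(p/(p-1))})^{(p-1)/p} = 2^{(1/2 - 1/p)(m-1)} · ‖T_m‖. -/

import Mathlib

open Finset

noncomputable section StmtAux

/-- sign attached to a bit -/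
def sg : Fin 2 → ℝ := fun s => if s = 0 then 1 else -1

lemma sg_cases (s : Fin 2) : sg s = 1 ∨ sg s = -1 := by unfold sg; split <;> simp

/-- the bit pattern of the coordinate used in slot `r` -/
def bitf (k : ℕ) (r : Fin (k+1)) (b : Fin (k+1) → Fin 2) (s : Fin 2) : Fin (k+1) → Fin 2 :=
  fun t => if (t : ℕ) = 0 then s
    else if h : (t : ℕ) + (r : ℕ) ≤ k then b ⟨(t : ℕ) + (r : ℕ), Nat.lt_succ_of_le h⟩ else 0

def pos (k : ℕ) (r : Fin (k+1)) (b : Fin (k+1) → Fin 2) (s : Fin 2) : Fin (2 ^ (k+1)) :=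
  finFunctionFinEquiv (bitf k r b s)

lemma pos_congr (k : ℕ) (r : Fin (k+1)) (b b' : Fin (k+1) → Fin 2) (s : Fin 2)
    (h : ∀ t, r < t → b t = b' t) : pos k r b s = pos k r b' s := by
  unfold pos
  congr 1
  funext t
  unfold bitf
  split
  · rfl
  · rename_i ht
    split
    · rename_i hle
      exact h _ (by rw [Fin.lt_def]; simp only [Fin.val_mk]; omega)
    · rfl

lemma pos_ne (k : ℕ) (r : Fin (k+1)) (b : Fin (k+1) → Fin 2) :
    pos k r b 0 ≠ pos k r b 1 := by
  unfold pos
  intro h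
  have := finFunctionFinEquiv.injective h
  have h0 := congrFun this ⟨0, Nat.succ_pos k⟩
  simp [bitf] at h0

def Tlin (k : ℕ) (j : Fin (2 ^ (k+1))) :
    (i : Fin (k+2)) → ((Fin (2 ^ (k+1)) → ℝ) →ₗ[ℝ] ℝ) :=
  Fin.cases (LinearMap.proj j)
    (fun r => LinearMap.proj (pos k r (finFunctionFinEquiv.symm j) 0)
      + sg (finFunctionFinEquiv.symm j r) • LinearMap.proj (pos k r (finFunctionFinEquiv.symm j) 1))

def Tform (k : ℕ) : MultilinearMap ℝ (fun _ : Fin (k + 2) => (Fin (2 ^ (k + 1)) → ℝ)) ℝ :=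
  ∑ j, (MultilinearMap.mkPiAlgebra ℝ (Fin (k + 2)) ℝ).compLinearMap (Tlin k j)

lemma Tform_apply (k : ℕ) (x : (i : Fin (k+2)) → (Fin (2 ^ (k+1)) → ℝ)) :
    Tform k x = ∑ j, x 0 j *
      ∏ r : Fin (k+1), (x r.succ (pos k r (finFunctionFinEquiv.symm j) 0)
        + sg (finFunctionFinEquiv.symm j r) * x r.succ (pos k r (finFunctionFinEquiv.symm j) 1)) := by
  simp [Tform, MultilinearMap.sum_apply, Fin.prod_univ_succ, Tlin]

lemma sum_prod_abs_le {α : Type} [Fintype α] :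
    ∀ (n : ℕ) (y : Fin n → α → ℝ) (P : Fin n → (Fin n → Fin 2) → Fin 2 → α),
    (∀ r b b' s, (∀ t, r < t → b t = b' t) → P r b s = P r b' s) →
    (∀ r a, |y r a| ≤ 1) →
    ∑ b : Fin n → Fin 2, ∏ r, |y r (P r b 0) + sg (b r) * y r (P r b 1)| ≤ 2 ^ n := by
  intro n
  induction n with
  | zero => intro y P hP hy; simp
  | succ n ih =>
    intro y P hP hy
    rw [← Equiv.sum_comp (Fin.consEquiv fun _ => Fin 2), Fintype.sum_prod_type_right]
    have hcons : ∀ (s : Fin 2) (c : Fin n → Fin 2) (r : Fin (n+1)) (u : Fin 2),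
        P r (Fin.cons s c) u = P r (Fin.cons 0 c) u := by
      intro s c r u
      apply hP
      intro t ht
      rcases Fin.eq_zero_or_eq_succ t with rfl | ⟨i, rfl⟩
      · exact absurd ht (by simp)
      · simp [Fin.cons_succ]
    have key : ∀ c : Fin n → Fin 2,
        ∑ s : Fin 2, ∏ r : Fin (n+1),
          |y r (P r (Fin.consEquiv (fun _ => Fin 2) (s, c)) 0)
            + sg ((Fin.consEquiv (fun _ => Fin 2) (s, c)) r)
              * y r (P r (Fin.consEquiv (fun _ => Fin 2) (s, c)) 1)|
        ≤ 2 * ∏ r : Fin n,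
          |y r.succ (P r.succ (Fin.cons 0 c) 0)
            + sg (c r) * y r.succ (P r.succ (Fin.cons 0 c) 1)| := by
      intro c
      have hce : ∀ s : Fin 2, (Fin.consEquiv (fun _ => Fin 2) (s, c)) = Fin.cons s c := by
        intro s; rfl
      simp only [hce]
      rw [Fin.sum_univ_two]
      simp only [Fin.prod_univ_succ, Fin.cons_zero, Fin.cons_succ]
      simp only [hcons]
      set A := y 0 (P 0 (Fin.cons 0 c) 0) with hA
      set B := y 0 (P 0 (Fin.cons 0 c) 1) with hB
      set Tl := ∏ r : Fin n, |y r.succ (P r.succ (Fin.cons 0 c) 0)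
            + sg (c r) * y r.succ (P r.succ (Fin.cons 0 c) 1)| with hTl
      have hTl0 : 0 ≤ Tl := Finset.prod_nonneg fun r _ => abs_nonneg _
      have h2 : |A + sg 0 * B| + |A + sg 1 * B| ≤ 2 := by
        have hA1 : |A| ≤ 1 := hy 0 _
        have hB1 : |B| ≤ 1 := hy 0 _
        simp only [sg]
        norm_num
        simp only [← sub_eq_add_neg]
        cases abs_cases (A + B) <;> cases abs_cases (A - B) <;>
          cases abs_cases A <;> cases abs_cases B <;> linarith
      calc |A + sg 0 * B| * Tl + |A + sg 1 * B| * Tl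
          = (|A + sg 0 * B| + |A + sg 1 * B|) * Tl := by ring
        _ ≤ 2 * Tl := mul_le_mul_of_nonneg_right h2 hTl0
    calc ∑ c : Fin n → Fin 2, ∑ s : Fin 2, ∏ r : Fin (n+1),
          |y r (P r (Fin.consEquiv (fun _ => Fin 2) (s, c)) 0)
            + sg ((Fin.consEquiv (fun _ => Fin 2) (s, c)) r)
              * y r (P r (Fin.consEquiv (fun _ => Fin 2) (s, c)) 1)|
        ≤ ∑ c : Fin n → Fin 2, 2 * ∏ r : Fin n,
          |y r.succ (P r.succ (Fin.cons 0 c) 0)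
            + sg (c r) * y r.succ (P r.succ (Fin.cons 0 c) 1)| :=
          Finset.sum_le_sum fun c _ => key c
      _ = 2 * ∑ c : Fin n → Fin 2, ∏ r : Fin n,
          |y r.succ (P r.succ (Fin.cons 0 c) 0)
            + sg (c r) * y r.succ (P r.succ (Fin.cons 0 c) 1)| := by
          rw [Finset.mul_sum]
      _ ≤ 2 * 2 ^ n := by
          have := ih (fun r => y r.succ) (fun r c s => P r.succ (Fin.cons 0 c) s)
            (by
              intro r b b' s hbb
              apply hP
              intro t ht
              rcases Fin.eq_zero_or_eq_succ t with rfl | ⟨i, rfl⟩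
              · exact absurd ht (by simp)
              · simp only [Fin.cons_succ]
                exact hbb i (Fin.succ_lt_succ_iff.mp ht))
            (fun r a => hy r.succ a)
          linarith
      _ = 2 ^ (n + 1) := by ring

/-- the coefficient factor -/
def cf (k : ℕ) (b : Fin (k+1) → Fin 2) (r : Fin (k+1)) (w : Fin (2 ^ (k+1))) : ℝ :=
  (if pos k r b 0 = w then 1 else 0) + sg (b r) * (if pos k r b 1 = w then 1 else 0)

lemma Tform_coeff (k : ℕ) (v : Fin (k+2) → Fin (2 ^ (k+1))) :
    Tform k (fun i => Pi.single (v i) 1) =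
      ∏ r : Fin (k+1), cf k (finFunctionFinEquiv.symm (v 0)) r (v r.succ) := by
  rw [Tform_apply]
  rw [Finset.sum_eq_single (v 0)]
  · simp [Pi.single_apply, cf]
  · intro j _ hj
    simp [Pi.single_apply, hj]
  · intro h
    exact absurd (Finset.mem_univ _) h

lemma cf_mem (k : ℕ) (b : Fin (k+1) → Fin 2) (r : Fin (k+1)) (w : Fin (2 ^ (k+1))) :
    cf k b r w = -1 ∨ cf k b r w = 0 ∨ cf k b r w = 1 := by
  have hne := pos_ne k r b
  unfold cf
  rcases sg_cases (b r) with h | h <;> rw [h] <;> split_ifs with h1 h2 h2 <;>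
    first
      | (exact absurd (h1.trans h2.symm) hne)
      | norm_num

lemma cf_sq (k : ℕ) (b : Fin (k+1) → Fin 2) (r : Fin (k+1)) (w : Fin (2 ^ (k+1))) :
    (cf k b r w) ^ 2 =
      (if pos k r b 0 = w then (1:ℝ) else 0) + (if pos k r b 1 = w then 1 else 0) := by
  have hne := pos_ne k r b
  unfold cf
  rcases sg_cases (b r) with h | h <;> rw [h] <;> split_ifs with h1 h2 h2 <;>
    first
      | (exact absurd (h1.trans h2.symm) hne)
      | norm_num

lemma innerSumCf (k : ℕ) (b : Fin (k+1) → Fin 2) :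
    ∑ i : Fin (k+1) → Fin (2 ^ (k+1)),
      |∏ r : Fin (k+1), cf k b r (i r)| ^ (2:ℝ) = 2 ^ (k+1) := by
  have h2 : ∀ z : ℝ, |z| ^ (2:ℝ) = z ^ 2 := by
    intro z
    rw [show ((2:ℝ)) = ((2:ℕ):ℝ) by norm_num, Real.rpow_natCast, sq_abs]
  calc ∑ i : Fin (k+1) → Fin (2 ^ (k+1)), |∏ r : Fin (k+1), cf k b r (i r)| ^ (2:ℝ)
      = ∑ i : Fin (k+1) → Fin (2 ^ (k+1)), ∏ r : Fin (k+1), (cf k b r (i r)) ^ 2 := by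
        refine Finset.sum_congr rfl fun i _ => ?_
        rw [h2, ← Finset.prod_pow]
    _ = ∏ r : Fin (k+1), ∑ w : Fin (2 ^ (k+1)), (cf k b r w) ^ 2 := by
        rw [Fintype.prod_sum]
    _ = ∏ r : Fin (k+1), (2:ℝ) := by
        refine Finset.prod_congr rfl fun r _ => ?_
        simp only [cf_sq, Finset.sum_add_distrib]
        rw [Finset.sum_ite_eq, Finset.sum_ite_eq]
        simp
        norm_num
    _ = 2 ^ (k+1) := by
        rw [Finset.prod_const, Finset.card_univ, Fintype.card_fin]

end StmtAux

theorem stmt4 (p : ℝ) (hp : 2 ≤ p) (k : ℕ) :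
    ∃ T : MultilinearMap ℝ (fun _ : Fin (k + 2) => (Fin (2 ^ (k + 1)) → ℝ)) ℝ,
      (∀ v : Fin (k + 2) → Fin (2 ^ (k + 1)),
        T (fun j => Pi.single (v j) 1) ∈ ({-1, 0, 1} : Set ℝ)) ∧
      sSup {t : ℝ | ∃ x : Fin (k + 2) → (Fin (2 ^ (k + 1)) → ℝ),
          (∑ n, |x 0 n| ^ p) ^ (1 / p) ≤ 1 ∧
          (∀ i, i ≠ 0 → ∀ n, |x i n| ≤ 1) ∧ t = |T x|} = 2 ^ (k + 1) ∧
      (∑ i₁ : Fin (2 ^ (k + 1)), (∑ i : Fin (k + 1) → Fin (2 ^ (k + 1)),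
          |T (fun j => Pi.single ((Fin.cons i₁ i : Fin (k + 2) → Fin (2 ^ (k + 1))) j) 1)| ^ (2 : ℝ))
            ^ ((1 / 2) * (p / (p - 1)))) ^ ((p - 1) / p)
        = 2 ^ (((1 : ℝ) / 2 - 1 / p) * (k + 1)) * 2 ^ (k + 1) := by
  have hp0 : (0:ℝ) < p := by linarith
  have hp1 : p - 1 ≠ 0 := by intro h; nlinarith
  haveI : NeZero (2 ^ (k+1)) := ⟨pow_ne_zero _ two_ne_zero⟩
  refine ⟨Tform k, ?_, ?_, ?_⟩
  · -- coefficients in {-1,0,1}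
    intro v
    rw [Tform_coeff]
    have : ∀ z : ℝ, z ∈ ({-1, 0, 1} : Set ℝ) ↔ (z = -1 ∨ z = 0 ∨ z = 1) := by
      intro z; simp [Set.mem_insert_iff]
    rw [this]
    refine Finset.prod_induction _ (fun z => z = -1 ∨ z = 0 ∨ z = 1) ?_ (by norm_num) ?_
    · rintro x y (rfl | rfl | rfl) (rfl | rfl | rfl) <;> norm_num
    · intro r _
      exact cf_mem k _ r _
  · -- sSup
    set S := {t : ℝ | ∃ x : Fin (k + 2) → (Fin (2 ^ (k + 1)) → ℝ),
          (∑ n, |x 0 n| ^ p) ^ (1 / p) ≤ 1 ∧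
          (∀ i, i ≠ 0 → ∀ n, |x i n| ≤ 1) ∧ t = |Tform k x|} with hS
    have hub : ∀ t ∈ S, t ≤ 2 ^ (k+1) := by
      rintro t ⟨x, hx0, hxi, rfl⟩
      -- each coordinate of x 0 is bounded by 1
      have hsum1 : ∑ n, |x 0 n| ^ p ≤ 1 := by
        have hnn : (0:ℝ) ≤ ∑ n, |x 0 n| ^ p :=
          Finset.sum_nonneg fun n _ => Real.rpow_nonneg (abs_nonneg _) _
        by_contra hc
        push_neg at hc
        have : (1:ℝ) < (∑ n, |x 0 n| ^ p) ^ (1/p) := by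
          calc (1:ℝ) = 1 ^ (1/p) := (Real.one_rpow _).symm
            _ < (∑ n, |x 0 n| ^ p) ^ (1/p) :=
                Real.rpow_lt_rpow (by norm_num) hc (by positivity)
        linarith
      have hx0b : ∀ n, |x 0 n| ≤ 1 := by
        intro n
        by_contra hc
        push_neg at hc
        have h1 : (1:ℝ) < |x 0 n| ^ p := by
          calc (1:ℝ) = 1 ^ p := (Real.one_rpow _).symm
            _ < |x 0 n| ^ p := Real.rpow_lt_rpow (by norm_num) hc hp0
        have h2 : |x 0 n| ^ p ≤ ∑ m, |x 0 m| ^ p :=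
          Finset.single_le_sum (fun m _ => Real.rpow_nonneg (abs_nonneg _) _)
            (Finset.mem_univ n)
        linarith
      rw [Tform_apply]
      calc |∑ j, x 0 j * ∏ r : Fin (k+1),
            (x r.succ (pos k r (finFunctionFinEquiv.symm j) 0)
              + sg (finFunctionFinEquiv.symm j r)
                * x r.succ (pos k r (finFunctionFinEquiv.symm j) 1))|
          ≤ ∑ j, |x 0 j * ∏ r : Fin (k+1),
            (x r.succ (pos k r (finFunctionFinEquiv.symm j) 0)
              + sg (finFunctionFinEquiv.symm j r)
                * x r.succ (pos k r (finFunctionFinEquiv.symm j) 1))| :=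
            Finset.abs_sum_le_sum_abs _ _
        _ ≤ ∑ j, ∏ r : Fin (k+1),
            |x r.succ (pos k r (finFunctionFinEquiv.symm j) 0)
              + sg (finFunctionFinEquiv.symm j r)
                * x r.succ (pos k r (finFunctionFinEquiv.symm j) 1)| := by
            refine Finset.sum_le_sum fun j _ => ?_
            rw [abs_mul, Finset.abs_prod]
            have hprod : (0:ℝ) ≤ ∏ r : Fin (k+1), |x r.succ (pos k r (finFunctionFinEquiv.symm j) 0)
              + sg (finFunctionFinEquiv.symm j r)
                * x r.succ (pos k r (finFunctionFinEquiv.symm j) 1)| :=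
              Finset.prod_nonneg fun r _ => abs_nonneg _
            calc |x 0 j| * _ ≤ 1 * _ := mul_le_mul_of_nonneg_right (hx0b j) hprod
              _ = _ := one_mul _
        _ = ∑ b : Fin (k+1) → Fin 2, ∏ r : Fin (k+1),
            |x r.succ (pos k r b 0) + sg (b r) * x r.succ (pos k r b 1)| := by
            rw [← Equiv.sum_comp (finFunctionFinEquiv :
              (Fin (k+1) → Fin 2) ≃ Fin (2 ^ (k+1)))]
            refine Finset.sum_congr rfl fun b _ => ?_
            rw [Equiv.symm_apply_apply]
        _ ≤ 2 ^ (k+1) := by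
            refine sum_prod_abs_le (k+1) (fun r => x r.succ) (fun r b s => pos k r b s)
              (fun r b b' s h => pos_congr k r b b' s h)
              (fun r a => hxi r.succ (Fin.succ_ne_zero r) a)
    have hmem : (2:ℝ) ^ (k+1) ∈ S := by
      set xw : Fin (k+2) → (Fin (2 ^ (k+1)) → ℝ) :=
        fun i => if i = 0 then (Pi.single 0 1 : Fin (2 ^ (k+1)) → ℝ) else fun _ => 1 with hxw
      have hxw0 : xw 0 = (Pi.single 0 1 : Fin (2 ^ (k+1)) → ℝ) := by simp [hxw]
      have hxws : ∀ r : Fin (k+1), xw r.succ = fun _ => (1:ℝ) := by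
        intro r; simp [hxw, Fin.succ_ne_zero r]
      refine ⟨xw, ?_, ?_, ?_⟩
      · rw [hxw0]
        have hsum : ∑ n : Fin (2 ^ (k+1)),
            |(Pi.single 0 1 : Fin (2 ^ (k+1)) → ℝ) n| ^ p = 1 := by
          rw [Finset.sum_eq_single (0 : Fin (2 ^ (k+1)))]
          · simp [Real.one_rpow]
          · intro n _ hn
            rw [Pi.single_apply, if_neg hn]
            simp [Real.zero_rpow (ne_of_gt hp0)]
          · intro h; exact absurd (Finset.mem_univ _) h
        rw [hsum, Real.one_rpow]
      · intro i hi n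
        have : xw i = fun _ => (1:ℝ) := by simp [hxw, hi]
        rw [this]
        norm_num
      · rw [Tform_apply]
        simp only [hxw0, hxws]
        rw [Finset.sum_eq_single (0 : Fin (2 ^ (k+1)))]
        · have hb0 : finFunctionFinEquiv.symm (0 : Fin (2 ^ (k+1))) = fun _ => 0 := by
            apply finFunctionFinEquiv.injective
            rw [Equiv.apply_symm_apply]
            ext
            simp [finFunctionFinEquiv_apply]
          rw [hb0]
          simp only [Pi.single_eq_same, one_mul]
          have hfac : ∀ r : Fin (k+1), (1 + sg ((fun _ => (0:Fin 2)) r) * 1) = (2:ℝ) := by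
            intro r; simp [sg]; norm_num
          rw [Finset.prod_congr rfl fun r _ => hfac r, Finset.prod_const,
            Finset.card_univ, Fintype.card_fin]
          rw [abs_of_nonneg (by positivity)]
        · intro j _ hj
          rw [Pi.single_apply, if_neg hj, zero_mul]
        · intro h; exact absurd (Finset.mem_univ _) h
    apply le_antisymm
    · exact csSup_le ⟨_, hmem⟩ hub
    · exact le_csSup ⟨_, hub⟩ hmem
  · -- coefficient sum identity
    have hinner : ∀ i₁ : Fin (2 ^ (k+1)),
        ∑ i : Fin (k + 1) → Fin (2 ^ (k + 1)),
          |Tform k (fun j => Pi.single ((Fin.cons i₁ i : Fin (k + 2) → Fin (2 ^ (k + 1))) j) 1)|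
            ^ (2 : ℝ) = 2 ^ (k+1) := by
      intro i₁
      have : ∀ i : Fin (k + 1) → Fin (2 ^ (k + 1)),
          Tform k (fun j => Pi.single ((Fin.cons i₁ i : Fin (k + 2) → Fin (2 ^ (k + 1))) j) 1)
            = ∏ r : Fin (k+1), cf k (finFunctionFinEquiv.symm i₁) r (i r) := by
        intro i
        rw [Tform_coeff]
        refine Finset.prod_congr rfl fun r _ => ?_
        rw [Fin.cons_zero, Fin.cons_succ]
      simp only [this]
      exact innerSumCf k (finFunctionFinEquiv.symm i₁)
    simp only [hinner]
    -- now pure rpow algebra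
    have h2pos : (0:ℝ) < 2 := by norm_num
    have hN : ((2:ℝ) ^ (k+1)) = (2:ℝ) ^ ((k+1 : ℕ) : ℝ) := by
      rw [Real.rpow_natCast]
    have hcast : ((k+1:ℕ):ℝ) = (k:ℝ)+1 := by push_cast; ring
    rw [hN, Finset.sum_const, Finset.card_univ, Fintype.card_fin, nsmul_eq_mul,
      Nat.cast_pow, Nat.cast_ofNat, hN,
      ← Real.rpow_mul (le_of_lt h2pos), ← Real.rpow_add h2pos,
      ← Real.rpow_mul (le_of_lt h2pos), ← Real.rpow_add h2pos, hcast]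
    congr 1
    field_simp
    ring
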